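/- arXiv:2104.10427 — 5 statements merged into one kernel-verified Lean document; each statement's English description precedes it below -/
import Mathlib

section
/- A weighted Gaussian F(x) = (λ/√(2πσ)) exp(−(x+c)²/(2σ)) is a solution of (σ²/2)F'' + cσF' + (1 − x²/2 − ∫F)F = 0 if and only if λ = 1 − c²/2 − σ/2. -/
open Real

theorem stationary_iff_lambda (σ c : ℝ) (hσ : 0 < σ)
    (lam : ℝ) (hlam_pos : 0 < lam)
    (F : ℝ → ℝ)
    (hF : ∀ x, F x = lam / Real.sqrt (2 * π * σ) * Real.exp (-(x + c) ^ 2 / (2 * σ))) :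
    (∀ x : ℝ,
        σ ^ 2 / 2 * deriv (deriv F) x + c * σ * deriv F x
          + (1 - x ^ 2 / 2 - lam) * F x = 0)
      ↔ lam = 1 - c ^ 2 / 2 - σ / 2 := by
  have hσ' : σ ≠ 0 := ne_of_gt hσ
  have hA : 0 < lam / Real.sqrt (2 * π * σ) :=
    div_pos hlam_pos (Real.sqrt_pos.mpr (by positivity))
  have hFfun : F = fun x => lam / Real.sqrt (2 * π * σ) * Real.exp (-(x + c) ^ 2 / (2 * σ)) :=
    funext hF
  have hFpos : ∀ x, 0 < F x := by
    intro x; rw [hF x]; positivity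
  have hd1 : ∀ x, HasDerivAt F (-(x + c) / σ * F x) x := by
    intro x
    have h1 : HasDerivAt (fun x : ℝ => -(x + c) ^ 2 / (2 * σ)) (-(x + c) / σ) x := by
      have h := (((hasDerivAt_id x).add_const c).pow 2).neg.div_const (2 * σ)
      refine h.congr_deriv ?_
      simp; field_simp; ring
    have h2 := (h1.exp).const_mul (lam / Real.sqrt (2 * π * σ))
    rw [hFfun]
    refine h2.congr_deriv ?_
    beta_reduce
    ring
  have hF' : deriv F = fun x => -(x + c) / σ * F x := funext fun x => (hd1 x).deriv
  have hd2 : ∀ x, HasDerivAt (deriv F)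
      (-(1 / σ) * F x + -(x + c) / σ * (-(x + c) / σ * F x)) x := by
    intro x
    rw [hF']
    have hl : HasDerivAt (fun x : ℝ => -(x + c) / σ) (-(1 / σ)) x := by
      have h := ((hasDerivAt_id x).add_const c).neg.div_const σ
      refine h.congr_deriv ?_
      ring
    exact hl.mul (hd1 x)
  have hF'' : ∀ x, deriv (deriv F) x
      = -(1 / σ) * F x + -(x + c) / σ * (-(x + c) / σ * F x) := fun x => (hd2 x).deriv
  constructor
  · intro h
    have hx := h (-c)
    rw [hF'' (-c), hF'] at hx
    have hFc := hFpos (-c)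
    simp only [] at hx
    have : F (-c) * (1 - c ^ 2 / 2 - σ / 2 - lam) = 0 := by
      field_simp at hx ⊢
      nlinarith [hx]
    rcases mul_eq_zero.mp this with h0 | h0
    · exact absurd h0 (ne_of_gt hFc)
    · linarith
  · intro h x
    rw [hF'' x, hF', h]
    simp only []
    field_simp
    ring
end

section
/- The function m defined by m_t(x) = √(1+tanh(σt)) · exp(−((x + e^{−σt}c)²/(2σ))(1+tanh(σt)) + (x+c)²/(2σ)) is a classical solution of the PDE ∂_t m = (σ²/2)∂²_{xx} m − σc ∂_x m + (1 − x²/2 − λ) m with initial condition m_0(x) = 1 for all x, where λ = 1 − c²/2 − σ/2. -/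
open Real

private lemma my_hasDerivAt_tanh (x : ℝ) :
    HasDerivAt Real.tanh (1 - Real.tanh x ^ 2) x := by
  have hc : Real.cosh x ≠ 0 := (Real.cosh_pos x).ne'
  have h := (Real.hasDerivAt_sinh x).fun_div (Real.hasDerivAt_cosh x) hc
  have hfun : (fun y => Real.sinh y / Real.cosh y) = Real.tanh := by
    funext y; rw [Real.tanh_eq_sinh_div_cosh]
  rw [hfun] at h
  have heq : (Real.cosh x * Real.cosh x - Real.sinh x * Real.sinh x) / Real.cosh x ^ 2
      = 1 - Real.tanh x ^ 2 := by
    rw [Real.tanh_eq_sinh_div_cosh]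
    have h1 := Real.cosh_sq_sub_sinh_sq x
    field_simp
  rwa [heq] at h

private lemma my_one_add_tanh_pos (x : ℝ) : 0 < 1 + Real.tanh x := by
  have hc : 0 < Real.cosh x := Real.cosh_pos x
  have : 1 + Real.tanh x = Real.exp x / Real.cosh x := by
    rw [Real.tanh_eq_sinh_div_cosh]
    field_simp
    try linarith [Real.cosh_add_sinh x]
  rw [this]
  positivity

theorem m_solves_pde (σ c : ℝ) (hσ : 0 < σ)
    (lam : ℝ) (hlam : lam = 1 - c ^ 2 / 2 - σ / 2)
    (m : ℝ → ℝ → ℝ)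
    (hm : ∀ t x, m t x =
      Real.sqrt (1 + Real.tanh (σ * t)) *
        Real.exp (-((x + Real.exp (-σ * t) * c) ^ 2 / (2 * σ)) * (1 + Real.tanh (σ * t))
          + (x + c) ^ 2 / (2 * σ))) :
    (∀ t x : ℝ, 0 ≤ t →
      deriv (fun s => m s x) t =
        σ ^ 2 / 2 * deriv (deriv (m t)) x - σ * c * deriv (m t) x
          + (1 - x ^ 2 / 2 - lam) * m t x)
    ∧ (∀ x : ℝ, m 0 x = 1) := by
  have hσ' : σ ≠ 0 := hσ.ne'
  -- rewritten form of m
  have hm' : ∀ t y, m t y = Real.sqrt (1 + Real.tanh (σ * t)) *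
      Real.exp ((y + Real.exp (-σ * t) * c) ^ 2 / (2 * σ) * (-(1 + Real.tanh (σ * t)))
        + (y + c) ^ 2 / (2 * σ)) := by
    intro t y
    rw [hm]
    congr 1
    ring_nf
  constructor
  · intro t x _
    set u : ℝ := Real.tanh (σ * t) with hu
    set a : ℝ := Real.exp (-σ * t) with ha
    have hS : 0 < 1 + u := my_one_add_tanh_pos (σ * t)
    set sq : ℝ := Real.sqrt (1 + u) with hsqdef
    have hsqpos : 0 < sq := Real.sqrt_pos.mpr hS
    have hsq : sq ^ 2 = 1 + u := Real.sq_sqrt hS.le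
    -- x-derivatives (t fixed)
    have hA : ∀ y : ℝ, HasDerivAt (fun y : ℝ => y + a * c) 1 y := fun y =>
      (hasDerivAt_id y).add_const (a * c)
    have hB : ∀ y : ℝ, HasDerivAt (fun y : ℝ => y + c) 1 y := fun y =>
      (hasDerivAt_id y).add_const c
    have h1 : ∀ y : ℝ, HasDerivAt (fun y : ℝ => (y + a * c) ^ 2) (2 * (y + a * c)) y := by
      intro y; simpa using (hA y).fun_pow 2
    have h2 : ∀ y : ℝ, HasDerivAt (fun y : ℝ => (y + c) ^ 2) (2 * (y + c)) y := by
      intro y; simpa using (hB y).fun_pow 2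
    have hGx : ∀ y : ℝ, HasDerivAt
        (fun y : ℝ => (y + a * c) ^ 2 / (2 * σ) * (-(1 + u)) + (y + c) ^ 2 / (2 * σ))
        (2 * (y + a * c) / (2 * σ) * (-(1 + u)) + 2 * (y + c) / (2 * σ)) y := by
      intro y
      exact (((h1 y).div_const (2 * σ)).mul_const (-(1 + u))).add ((h2 y).div_const (2 * σ))
    -- first x-derivative of m t
    have hmt : m t = fun y => sq *
        Real.exp ((y + a * c) ^ 2 / (2 * σ) * (-(1 + u)) + (y + c) ^ 2 / (2 * σ)) := by
      funext y; exact hm' t y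
    have hmx : ∀ y : ℝ, HasDerivAt (m t)
        (sq * Real.exp ((y + a * c) ^ 2 / (2 * σ) * (-(1 + u)) + (y + c) ^ 2 / (2 * σ)) *
          (2 * (y + a * c) / (2 * σ) * (-(1 + u)) + 2 * (y + c) / (2 * σ))) y := by
      intro y
      rw [hmt]
      have := ((hGx y).exp).const_mul sq
      exact this.congr_deriv (by ring)
    have hderiv1 : deriv (m t) = fun y =>
        sq * Real.exp ((y + a * c) ^ 2 / (2 * σ) * (-(1 + u)) + (y + c) ^ 2 / (2 * σ)) *
          (2 * (y + a * c) / (2 * σ) * (-(1 + u)) + 2 * (y + c) / (2 * σ)) := by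
      funext y; exact (hmx y).deriv
    -- second x-derivative
    have hPx : ∀ y : ℝ, HasDerivAt
        (fun y : ℝ => 2 * (y + a * c) / (2 * σ) * (-(1 + u)) + 2 * (y + c) / (2 * σ))
        (2 / (2 * σ) * (-(1 + u)) + 2 / (2 * σ)) y := by
      intro y
      have := ((((hA y).const_mul 2).div_const (2 * σ)).mul_const (-(1 + u))).fun_add
        (((hB y).const_mul 2).div_const (2 * σ))
      simpa using this
    have hmxx : HasDerivAt (deriv (m t))
        (sq * Real.exp ((x + a * c) ^ 2 / (2 * σ) * (-(1 + u)) + (x + c) ^ 2 / (2 * σ)) *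
            (2 * (x + a * c) / (2 * σ) * (-(1 + u)) + 2 * (x + c) / (2 * σ)) *
            (2 * (x + a * c) / (2 * σ) * (-(1 + u)) + 2 * (x + c) / (2 * σ))
          + sq * Real.exp ((x + a * c) ^ 2 / (2 * σ) * (-(1 + u)) + (x + c) ^ 2 / (2 * σ)) *
            (2 / (2 * σ) * (-(1 + u)) + 2 / (2 * σ))) x := by
      rw [hderiv1]
      have hf : HasDerivAt (fun y : ℝ => sq *
          Real.exp ((y + a * c) ^ 2 / (2 * σ) * (-(1 + u)) + (y + c) ^ 2 / (2 * σ)))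
          (sq * Real.exp ((x + a * c) ^ 2 / (2 * σ) * (-(1 + u)) + (x + c) ^ 2 / (2 * σ)) *
            (2 * (x + a * c) / (2 * σ) * (-(1 + u)) + 2 * (x + c) / (2 * σ))) x := by
        have := ((hGx x).exp).const_mul sq
        exact this.congr_deriv (by ring)
      have := hf.fun_mul (hPx x)
      convert this using 1
      try ring
    -- t-derivative (x fixed)
    have h_ts : HasDerivAt (fun s : ℝ => σ * s) σ t := by
      simpa using (hasDerivAt_id t).const_mul σ
    have h_tanh : HasDerivAt (fun s : ℝ => Real.tanh (σ * s)) ((1 - u ^ 2) * σ) t := by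
      simpa [Function.comp_def] using (my_hasDerivAt_tanh (σ * t)).comp t h_ts
    have h_a : HasDerivAt (fun s : ℝ => Real.exp (-σ * s)) (a * (-σ)) t := by
      have := (((hasDerivAt_id t).const_mul (-σ)).exp)
      simpa [ha] using this
    have h_sqrt : HasDerivAt (fun s : ℝ => Real.sqrt (1 + Real.tanh (σ * s)))
        (1 / (2 * sq) * ((1 - u ^ 2) * σ)) t := by
      have hs := Real.hasDerivAt_sqrt (x := 1 + u) hS.ne'
      have hc := h_tanh.const_add 1
      simpa [hsqdef, Function.comp_def] using hs.comp t hc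
    have h_G : HasDerivAt (fun s : ℝ =>
        (x + Real.exp (-σ * s) * c) ^ 2 / (2 * σ) * (-(1 + Real.tanh (σ * s)))
          + (x + c) ^ 2 / (2 * σ))
        ((2 * (x + a * c) * (a * (-σ) * c)) / (2 * σ) * (-(1 + u))
          + (x + a * c) ^ 2 / (2 * σ) * (-((1 - u ^ 2) * σ))) t := by
      have hf1 : HasDerivAt (fun s : ℝ => (x + Real.exp (-σ * s) * c) ^ 2 / (2 * σ))
          ((2 * (x + a * c) * (a * (-σ) * c)) / (2 * σ)) t := by
        have := (((h_a.mul_const c).const_add x).fun_pow 2).div_const (2 * σ)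
        exact this.congr_deriv (by push_cast; ring)
      have hf2 : HasDerivAt (fun s : ℝ => -(1 + Real.tanh (σ * s)))
          (-((1 - u ^ 2) * σ)) t := (h_tanh.const_add 1).neg
      have := (hf1.fun_mul hf2).add_const ((x + c) ^ 2 / (2 * σ))
      convert this using 1
      try ring
    have h_mt : HasDerivAt (fun s => m s x)
        (1 / (2 * sq) * ((1 - u ^ 2) * σ) *
            Real.exp ((x + a * c) ^ 2 / (2 * σ) * (-(1 + u)) + (x + c) ^ 2 / (2 * σ))
          + sq * Real.exp ((x + a * c) ^ 2 / (2 * σ) * (-(1 + u)) + (x + c) ^ 2 / (2 * σ)) *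
            ((2 * (x + a * c) * (a * (-σ) * c)) / (2 * σ) * (-(1 + u))
              + (x + a * c) ^ 2 / (2 * σ) * (-((1 - u ^ 2) * σ)))) t := by
      have hfun : (fun s => m s x) = fun s => Real.sqrt (1 + Real.tanh (σ * s)) *
          Real.exp ((x + Real.exp (-σ * s) * c) ^ 2 / (2 * σ) * (-(1 + Real.tanh (σ * s)))
            + (x + c) ^ 2 / (2 * σ)) := by
        funext s; exact hm' s x
      rw [hfun]
      have := h_sqrt.fun_mul h_G.exp
      exact this.congr_deriv (by ring)
    -- now put everything together
    rw [h_mt.deriv, hmxx.deriv, (hmx x).deriv, hm' t x, hlam]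
    rw [← hu, ← ha, ← hsqdef]
    set E : ℝ := Real.exp ((x + a * c) ^ 2 / (2 * σ) * (-(1 + u)) + (x + c) ^ 2 / (2 * σ))
      with hE
    -- eliminate 1/sq using sq^2 = 1 + u
    have key : 1 / (2 * sq) * ((1 - u ^ 2) * σ) = sq * ((1 - u) * σ / 2) := by
      have : (1 : ℝ) - u ^ 2 = sq ^ 2 * (1 - u) := by rw [hsq]; ring
      rw [this]
      field_simp
    rw [key]
    field_simp
    nlinarith [hsq, sq_nonneg sq, mul_pos hσ hσ]
  · intro x
    rw [hm]
    simp
end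

section
/- Define b(t,x) = −σ tanh(σ(T−t)) x − σc/cosh(σ(T−t)) and let p(t,x) be the Gaussian density with mean −c e^{−σ(T−t)} and variance σ/(1+tanh(σ(T−t))). Then the time-reversed drift b^r(t,x) = −b(T−t,x) + σ² ∂_x log p(T−t,x) equals −σx for all 0 ≤ t ≤ T and x ∈ ℝ. -/
open Real

lemma log_gauss_deriv (A v m x : ℝ) (hA : 0 < A) (hv : 0 < v) :
    deriv (fun y => Real.log (A * Real.exp (-(y + m) ^ 2 / (2 * v)))) x
      = -(x + m) / v := by
  have hfun : (fun y => Real.log (A * Real.exp (-(y + m) ^ 2 / (2 * v))))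
      = fun y => Real.log A + -(y + m) ^ 2 / (2 * v) := by
    funext y
    rw [Real.log_mul (ne_of_gt hA) (Real.exp_ne_zero _), Real.log_exp]
  rw [hfun]
  have h1 : HasDerivAt (fun y : ℝ => (y + m) ^ 2) (2 * (x + m)) x := by
    simpa using ((hasDerivAt_id x).add_const m).fun_pow 2
  have h2 : HasDerivAt (fun y : ℝ => Real.log A + -(y + m) ^ 2 / (2 * v))
      (-(2 * (x + m)) / (2 * v)) x := (h1.neg.div_const (2 * v)).const_add _
  rw [h2.deriv]
  field_simp

theorem reversed_drift_is_OU (σ c T : ℝ) (hσ : 0 < σ) (hT : 0 < T)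
    (b : ℝ → ℝ → ℝ)
    (hb : ∀ t x, b t x =
      -σ * Real.tanh (σ * (T - t)) * x - σ * c / Real.cosh (σ * (T - t)))
    (p : ℝ → ℝ → ℝ)
    (hp : ∀ t x, p t x =
      (1 / Real.sqrt (2 * π * (σ / (1 + Real.tanh (σ * (T - t)))))) *
        Real.exp (-(x + c * Real.exp (-σ * (T - t))) ^ 2 /
          (2 * (σ / (1 + Real.tanh (σ * (T - t)))))) ) :
    ∀ t x : ℝ, 0 ≤ t → t ≤ T →
      -b (T - t) x + σ ^ 2 * deriv (fun y => Real.log (p (T - t) y)) x = -σ * x := by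
  intro t x _ _
  have hTt : T - (T - t) = t := by ring
  have hcosh : 0 < Real.cosh (σ * t) := Real.cosh_pos _
  have hexp : Real.cosh (σ * t) + Real.sinh (σ * t) = Real.exp (σ * t) :=
    Real.cosh_add_sinh _
  have htanh : 1 + Real.tanh (σ * t) = Real.exp (σ * t) / Real.cosh (σ * t) := by
    rw [Real.tanh_eq_sinh_div_cosh, ← hexp]
    field_simp
  have hpos : 0 < 1 + Real.tanh (σ * t) := by
    rw [htanh]; positivity
  have hv : 0 < σ / (1 + Real.tanh (σ * t)) := div_pos hσ hpos
  have hA : 0 < 1 / Real.sqrt (2 * π * (σ / (1 + Real.tanh (σ * t)))) := by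
    have : 0 < 2 * π * (σ / (1 + Real.tanh (σ * t))) := by positivity
    positivity
  have hder : deriv (fun y => Real.log (p (T - t) y)) x
      = -(x + c * Real.exp (-σ * t)) / (σ / (1 + Real.tanh (σ * t))) := by
    have : (fun y => Real.log (p (T - t) y))
        = fun y => Real.log ((1 / Real.sqrt (2 * π * (σ / (1 + Real.tanh (σ * t))))) *
            Real.exp (-(y + c * Real.exp (-σ * t)) ^ 2 /
              (2 * (σ / (1 + Real.tanh (σ * t)))))) := by
      funext y
      rw [hp, hTt]
    rw [this, log_gauss_deriv _ _ _ _ hA hv]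
  rw [hder, hb, hTt]
  rw [Real.tanh_eq_sinh_div_cosh]
  have hexpne : Real.exp (σ * t) ≠ 0 := Real.exp_ne_zero _
  have hexneg : Real.exp (-σ * t) = 1 / Real.exp (σ * t) := by
    rw [show -σ * t = -(σ * t) by ring, Real.exp_neg, one_div]
  have hsinh : Real.sinh (σ * t) = Real.exp (σ * t) - Real.cosh (σ * t) := by
    linarith
  rw [hexneg]
  field_simp
  linear_combination (-c) * hsinh
end

section
/- If Y₀ ∼ N(−c e^{−σT}, σ/(1+tanh(σT))) and Y_t = (cosh(σ(T−t))/cosh(σT)) Y₀ + c cosh(σ(T−t))(tanh(σ(T−t)) − tanh(σT)) + G where G is an independent centered Gaussian with variance σ² cosh²(σ(T−t)) ∫_0^t ds/cosh²(σ(T−s)), then Y_t ∼ N(−c e^{−σ(T−t)}, σ/(1+tanh(σ(T−t)))). -/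
open Real MeasureTheory ProbabilityTheory
open scoped NNReal ENNReal

namespace GaussAux

lemma pdf_product (v₁ v₂ : ℝ≥0) (hv₁ : v₁ ≠ 0) (hv₂ : v₂ ≠ 0) (x y : ℝ) :
    gaussianPDFReal 0 v₁ x * gaussianPDFReal 0 v₂ (y - x)
      = gaussianPDFReal 0 (v₁ + v₂) y *
        gaussianPDFReal ((v₁ : ℝ) / (v₁ + v₂) * y) (v₁ * v₂ / (v₁ + v₂)) x := by
  have hA : (0:ℝ) < v₁ := lt_of_le_of_ne v₁.coe_nonneg (by exact_mod_cast hv₁.symm)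
  have hB : (0:ℝ) < v₂ := lt_of_le_of_ne v₂.coe_nonneg (by exact_mod_cast hv₂.symm)
  have hAB : (0:ℝ) < (v₁:ℝ) + v₂ := by linarith
  simp only [gaussianPDFReal, NNReal.coe_add, NNReal.coe_mul, NNReal.coe_div]
  rw [mul_mul_mul_comm, mul_mul_mul_comm _ _ ((√(2 * π * ((v₁:ℝ) * v₂ / (v₁ + v₂))))⁻¹),
    ← Real.exp_add, ← Real.exp_add,
    ← mul_inv, ← mul_inv, ← Real.sqrt_mul (by positivity), ← Real.sqrt_mul (by positivity)]
  congr 2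
  · field_simp
  · field_simp
    ring

end GaussAux

namespace GaussAux

lemma conv_centered (v₁ v₂ : ℝ≥0) (hv₁ : v₁ ≠ 0) (hv₂ : v₂ ≠ 0) :
    Measure.map (fun p : ℝ × ℝ => p.1 + p.2)
      ((gaussianReal 0 v₁).prod (gaussianReal 0 v₂)) = gaussianReal 0 (v₁ + v₂) := by
  have hv : v₁ + v₂ ≠ 0 := by simp [hv₁]
  have hw : v₁ * v₂ / (v₁ + v₂) ≠ 0 := div_ne_zero (mul_ne_zero hv₁ hv₂) hv
  rw [gaussianReal_of_var_ne_zero 0 hv₁, gaussianReal_of_var_ne_zero 0 hv₂,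
    gaussianReal_of_var_ne_zero 0 hv]
  ext s hs
  rw [Measure.map_apply measurable_add hs, withDensity_apply _ hs,
    Measure.prod_apply (measurable_add hs)]
  have h1 : ∀ x : ℝ, (volume.withDensity (gaussianPDF 0 v₂))
      (Prod.mk x ⁻¹' ((fun p : ℝ × ℝ => p.1 + p.2) ⁻¹' s))
      = ∫⁻ y, gaussianPDF 0 v₂ (y - x) * s.indicator 1 y := by
    intro x
    have hpre : MeasurableSet {y : ℝ | x + y ∈ s} := (measurable_id.const_add x) hs
    have : Prod.mk x ⁻¹' ((fun p : ℝ × ℝ => p.1 + p.2) ⁻¹' s) = {y : ℝ | x + y ∈ s} := rfl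
    rw [this, withDensity_apply _ hpre, ← lintegral_indicator hpre _]
    have : ∀ y : ℝ, {y : ℝ | x + y ∈ s}.indicator (gaussianPDF 0 v₂) y
        = gaussianPDF 0 v₂ y * s.indicator 1 (x + y) := by
      intro y
      by_cases hy : x + y ∈ s <;> simp [Set.indicator_apply, hy]
    simp_rw [this]
    calc ∫⁻ y, gaussianPDF 0 v₂ y * s.indicator 1 (x + y)
        = ∫⁻ y, gaussianPDF 0 v₂ ((y + x) - x) * s.indicator 1 (y + x) := by
          congr 1; ext y; rw [add_sub_cancel_right, add_comm]
      _ = ∫⁻ y, gaussianPDF 0 v₂ (y - x) * s.indicator 1 y :=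
          lintegral_add_right_eq_self (fun y => gaussianPDF 0 v₂ (y - x) * s.indicator 1 y) x
  simp_rw [h1]
  have hmeas2 : Measurable (fun p : ℝ × ℝ => gaussianPDF 0 v₂ (p.2 - p.1) * s.indicator 1 p.2) :=
    ((measurable_gaussianPDF 0 v₂).comp (measurable_snd.sub measurable_fst)).mul
      ((measurable_one.indicator hs).comp measurable_snd)
  rw [lintegral_withDensity_eq_lintegral_mul _ (measurable_gaussianPDF 0 v₁)
    (Measurable.lintegral_prod_right
      (f := fun x y => gaussianPDF 0 v₂ (y - x) * s.indicator 1 y) hmeas2)]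
  have h2 : ∀ x : ℝ, gaussianPDF 0 v₁ x * ∫⁻ y, gaussianPDF 0 v₂ (y - x) * s.indicator 1 y
      = ∫⁻ y, gaussianPDF 0 v₁ x * gaussianPDF 0 v₂ (y - x) * s.indicator 1 y := by
    intro x
    have hm : Measurable fun y : ℝ => gaussianPDF 0 v₂ (y - x) * s.indicator 1 y :=
      ((measurable_gaussianPDF 0 v₂).comp (measurable_sub_const x)).mul
        (measurable_one.indicator hs)
    rw [← lintegral_const_mul (gaussianPDF 0 v₁ x) hm]
    congr 1
    ext y
    ring
  simp only [Pi.mul_apply]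
  simp_rw [h2]
  rw [lintegral_lintegral_swap]; swap
  · exact (((measurable_gaussianPDF 0 v₁).comp measurable_fst).mul
      ((measurable_gaussianPDF 0 v₂).comp (measurable_snd.sub measurable_fst))).mul
      ((measurable_one.indicator hs).comp measurable_snd) |>.aemeasurable
  have h3 : ∀ y : ℝ, ∫⁻ x, gaussianPDF 0 v₁ x * gaussianPDF 0 v₂ (y - x) * s.indicator 1 y
      = gaussianPDF 0 (v₁ + v₂) y * s.indicator 1 y := by
    intro y
    have hm : Measurable fun x : ℝ => gaussianPDF 0 v₁ x * gaussianPDF 0 v₂ (y - x) :=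
      (measurable_gaussianPDF 0 v₁).mul
        ((measurable_gaussianPDF 0 v₂).comp (measurable_const_sub y))
    rw [lintegral_mul_const _ hm]
    congr 1
    have hpt : ∀ x : ℝ, gaussianPDF 0 v₁ x * gaussianPDF 0 v₂ (y - x)
        = gaussianPDF 0 (v₁ + v₂) y *
            gaussianPDF ((v₁ : ℝ) / (v₁ + v₂) * y) (v₁ * v₂ / (v₁ + v₂)) x := by
      intro x
      rw [gaussianPDF, gaussianPDF, gaussianPDF, gaussianPDF,
        ← ENNReal.ofReal_mul (gaussianPDFReal_nonneg _ _ _),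
        ← ENNReal.ofReal_mul (gaussianPDFReal_nonneg _ _ _), pdf_product v₁ v₂ hv₁ hv₂]
    simp_rw [hpt]
    rw [lintegral_const_mul _ (measurable_gaussianPDF _ _),
      lintegral_gaussianPDF_eq_one _ hw, mul_one]
  simp_rw [h3]
  rw [← lintegral_indicator hs _]
  congr 1
  ext y
  by_cases hy : y ∈ s <;> simp [Set.indicator_apply, hy]

end GaussAux

namespace GaussAux

variable {Ω : Type*} [MeasureSpace Ω] [IsProbabilityMeasure (ℙ : Measure Ω)]

lemma map_add_const' {X : Ω → ℝ} {μ : ℝ} {v : ℝ≥0} (hX : Measurable X)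
    (h : Measure.map X ℙ = gaussianReal μ v) (y : ℝ) :
    Measure.map (fun ω => X ω + y) ℙ = gaussianReal (μ + y) v := by
  rw [show (fun ω => X ω + y) = (fun x => x + y) ∘ X from rfl,
    ← Measure.map_map (measurable_add_const y) hX, h, gaussianReal_map_add_const]

lemma indep_gaussian_add {X Y : Ω → ℝ} (hX : Measurable X) (hY : Measurable Y)
    (hindep : IndepFun X Y) {m : ℝ} {v₁ v₂ : ℝ≥0}
    (h1 : Measure.map X ℙ = gaussianReal m v₁)
    (h2 : Measure.map Y ℙ = gaussianReal 0 v₂) :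
    Measure.map (fun ω => X ω + Y ω) ℙ = gaussianReal m (v₁ + v₂) := by
  by_cases hv₂ : v₂ = 0
  · subst hv₂
    rw [gaussianReal_zero_var] at h2
    have hY0 : ∀ᵐ ω ∂(ℙ : Measure Ω), Y ω = 0 := by
      have h0 : (ℙ : Measure Ω) (Y ⁻¹' {(0:ℝ)}) = 1 := by
        rw [← Measure.map_apply hY (measurableSet_singleton 0), h2]
        simp
      rw [ae_iff]
      have : {ω | ¬ Y ω = 0} = (Y ⁻¹' {(0:ℝ)})ᶜ := by ext ω; simp
      rw [this, measure_compl (hY (measurableSet_singleton 0)) (measure_ne_top _ _), h0]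
      simp
    have : (fun ω => X ω + Y ω) =ᵐ[(ℙ : Measure Ω)] X := by
      filter_upwards [hY0] with ω hω
      simp [hω]
    rw [Measure.map_congr this, h1, add_zero]
  by_cases hv₁ : v₁ = 0
  · subst hv₁
    rw [gaussianReal_zero_var] at h1
    have hX0 : ∀ᵐ ω ∂(ℙ : Measure Ω), X ω = m := by
      have h0 : (ℙ : Measure Ω) (X ⁻¹' {m}) = 1 := by
        rw [← Measure.map_apply hX (measurableSet_singleton m), h1]
        simp
      rw [ae_iff]
      have : {ω | ¬ X ω = m} = (X ⁻¹' {m})ᶜ := by ext ω; simp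
      rw [this, measure_compl (hX (measurableSet_singleton m)) (measure_ne_top _ _), h0]
      simp
    have : (fun ω => X ω + Y ω) =ᵐ[(ℙ : Measure Ω)] (fun ω => Y ω + m) := by
      filter_upwards [hX0] with ω hω
      simp [hω]; ring
    rw [Measure.map_congr this, map_add_const' hY h2, zero_add, zero_add]
  · -- main case
    set X' : Ω → ℝ := fun ω => X ω + (-m) with hX'def
    have hX' : Measurable X' := hX.add_const _
    have hmapX' : Measure.map X' ℙ = gaussianReal 0 v₁ := by
      rw [map_add_const' hX h1, add_neg_cancel]
    have hindep' : IndepFun X' Y := hindep.comp (measurable_add_const (-m)) measurable_id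
    have hcent : Measure.map (fun ω => X' ω + Y ω) ℙ = gaussianReal 0 (v₁ + v₂) := by
      have hpair : Measure.map (fun ω => (X' ω, Y ω)) ℙ
          = (Measure.map X' ℙ).prod (Measure.map Y ℙ) :=
        (indepFun_iff_map_prod_eq_prod_map_map hX'.aemeasurable hY.aemeasurable).mp hindep'
      rw [show (fun ω => X' ω + Y ω) = (fun p : ℝ × ℝ => p.1 + p.2) ∘ (fun ω => (X' ω, Y ω))
          from rfl,
        ← Measure.map_map measurable_add (hX'.prodMk hY), hpair, hmapX', h2,
        conv_centered v₁ v₂ hv₁ hv₂]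
    have := map_add_const' (hX'.add hY) hcent m
    rw [zero_add] at this
    rw [show (fun ω => X ω + Y ω) = (fun ω => X' ω + Y ω + m) from by
      funext ω; simp [hX'def]; ring] at *
    exact this

end GaussAux

namespace GaussAux

lemma hasDerivAt_tanh (x : ℝ) : HasDerivAt Real.tanh (1 / Real.cosh x ^ 2) x := by
  have h := (Real.hasDerivAt_sinh x).div (Real.hasDerivAt_cosh x) (Real.cosh_pos x).ne'
  have heq : (Real.sinh / Real.cosh) = Real.tanh := by
    funext y; rw [Pi.div_apply, Real.tanh_eq_sinh_div_cosh]
  rw [heq] at h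
  refine h.congr_deriv ?_
  have h1 := Real.cosh_sq_sub_sinh_sq x
  field_simp
  nlinarith [Real.cosh_pos x]

lemma integral_sech_sq (σ T : ℝ) (hσ : σ ≠ 0) (t : ℝ) :
    ∫ s in (0:ℝ)..t, 1 / Real.cosh (σ * (T - s)) ^ 2
      = (Real.tanh (σ * T) - Real.tanh (σ * (T - t))) / σ := by
  have hderiv : ∀ s ∈ Set.uIcc (0:ℝ) t,
      HasDerivAt (fun s => -(1/σ) * Real.tanh (σ * (T - s)))
        (1 / Real.cosh (σ * (T - s)) ^ 2) s := by
    intro s _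
    have h1 : HasDerivAt (fun s : ℝ => σ * (T - s)) (-σ) s := by
      simpa using ((hasDerivAt_id s).const_sub T).const_mul σ
    have h2 := (hasDerivAt_tanh (σ * (T - s))).comp s h1
    have h3 := h2.const_mul (-(1/σ))
    refine h3.congr_deriv ?_
    field_simp
  rw [intervalIntegral.integral_eq_sub_of_hasDerivAt hderiv]
  · simp only [sub_zero]
    field_simp
    ring
  · apply Continuous.intervalIntegrable
    have : Continuous fun s : ℝ => Real.cosh (σ * (T - s)) ^ 2 :=
      (Real.continuous_cosh.comp (continuous_const.mul (continuous_const.sub continuous_id))).pow 2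
    exact continuous_const.div this fun s => by positivity

lemma one_add_tanh (x : ℝ) : 1 + Real.tanh x = Real.exp x / Real.cosh x := by
  rw [Real.tanh_eq_sinh_div_cosh, ← Real.cosh_add_sinh]
  field_simp [(Real.cosh_pos x).ne']

lemma one_add_tanh_pos (x : ℝ) : 0 < 1 + Real.tanh x := by
  rw [one_add_tanh]
  positivity

lemma sig_div_one_add_tanh (σ x : ℝ) :
    σ / (1 + Real.tanh x) = σ * Real.cosh x * Real.exp (-x) := by
  rw [one_add_tanh, Real.exp_neg]
  field_simp [(Real.cosh_pos x).ne', (Real.exp_pos x).ne']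

end GaussAux

namespace GaussAux

lemma tanh_sub_tanh (S u : ℝ) :
    Real.tanh S - Real.tanh u = Real.sinh (S - u) / (Real.cosh S * Real.cosh u) := by
  rw [Real.sinh_sub, Real.tanh_eq_sinh_div_cosh, Real.tanh_eq_sinh_div_cosh]
  field_simp [(Real.cosh_pos S).ne', (Real.cosh_pos u).ne']

lemma mean_identity (σ c T t : ℝ) :
    Real.cosh (σ * (T - t)) / Real.cosh (σ * T) * (-c * Real.exp (-σ * T))
        + c * Real.cosh (σ * (T - t)) * (Real.tanh (σ * (T - t)) - Real.tanh (σ * T))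
      = -c * Real.exp (-σ * (T - t)) := by
  set u := σ * (T - t)
  set S := σ * T
  have h1 : -σ * T = -S := by ring
  have h2 : -σ * (T - t) = -u := by ring
  rw [h1, h2, Real.tanh_eq_sinh_div_cosh, Real.tanh_eq_sinh_div_cosh,
    Real.cosh_eq, Real.cosh_eq, Real.sinh_eq, Real.sinh_eq, Real.exp_neg, Real.exp_neg]
  have hu := (Real.exp_pos u).ne'
  have hS := (Real.exp_pos S).ne'
  have hcu : Real.exp u + (Real.exp u)⁻¹ ≠ 0 := by positivity
  have hcS : Real.exp S + (Real.exp S)⁻¹ ≠ 0 := by positivity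
  field_simp
  ring

lemma var_identity (σ c T t : ℝ) :
    (Real.cosh (σ * (T - t)) / Real.cosh (σ * T)) ^ 2 * (σ / (1 + Real.tanh (σ * T)))
        + σ ^ 2 * Real.cosh (σ * (T - t)) ^ 2 *
            ((Real.tanh (σ * T) - Real.tanh (σ * (T - t))) / σ)
      = σ / (1 + Real.tanh (σ * (T - t))) := by
  by_cases hσ : σ = 0
  · simp [hσ]
  set u := σ * (T - t)
  set S := σ * T
  rw [sig_div_one_add_tanh σ S, sig_div_one_add_tanh σ u,
    Real.tanh_eq_sinh_div_cosh, Real.tanh_eq_sinh_div_cosh,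
    Real.cosh_eq, Real.cosh_eq, Real.sinh_eq, Real.sinh_eq, Real.exp_neg, Real.exp_neg]
  have hu := (Real.exp_pos u).ne'
  have hS := (Real.exp_pos S).ne'
  have hcu : Real.exp u + (Real.exp u)⁻¹ ≠ 0 := by positivity
  have hcS : Real.exp S + (Real.exp S)⁻¹ ≠ 0 := by positivity
  field_simp
  ring

end GaussAux

theorem law_of_Yt (σ c T t : ℝ) (hσ : 0 < σ) (hT : 0 < T) (ht : 0 ≤ t) (htT : t ≤ T)
    {Ω : Type*} [MeasureSpace Ω] [IsProbabilityMeasure (ℙ : Measure Ω)]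
    (Y₀ G : Ω → ℝ) (hmeas₀ : Measurable Y₀) (hmeasG : Measurable G)
    (hindep : IndepFun Y₀ G)
    (hY₀ : Measure.map Y₀ ℙ =
      gaussianReal (-c * Real.exp (-σ * T))
        (Real.toNNReal (σ / (1 + Real.tanh (σ * T)))))
    (hG : Measure.map G ℙ =
      gaussianReal 0
        (Real.toNNReal (σ ^ 2 * Real.cosh (σ * (T - t)) ^ 2 *
          ∫ s in (0:ℝ)..t, 1 / Real.cosh (σ * (T - s)) ^ 2))) :
    Measure.map
        (fun ω =>
          Real.cosh (σ * (T - t)) / Real.cosh (σ * T) * Y₀ ω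
            + c * Real.cosh (σ * (T - t)) *
                (Real.tanh (σ * (T - t)) - Real.tanh (σ * T))
            + G ω) ℙ
      = gaussianReal (-c * Real.exp (-σ * (T - t)))
          (Real.toNNReal (σ / (1 + Real.tanh (σ * (T - t))))) := by
  have hint := GaussAux.integral_sech_sq σ T hσ.ne' t
  set a : ℝ := Real.cosh (σ * (T - t)) / Real.cosh (σ * T) with ha
  set b : ℝ := c * Real.cosh (σ * (T - t)) * (Real.tanh (σ * (T - t)) - Real.tanh (σ * T))
    with hb
  -- distribution of a • Y₀
  have h₁ : Measure.map (fun ω => a * Y₀ ω) ℙ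
      = gaussianReal (a * (-c * Real.exp (-σ * T)))
          (NNReal.mk (a ^ 2) (sq_nonneg _) * Real.toNNReal (σ / (1 + Real.tanh (σ * T)))) := by
    rw [show (fun ω => a * Y₀ ω) = (fun x => a * x) ∘ Y₀ from rfl,
      ← Measure.map_map (measurable_const_mul a) hmeas₀, hY₀, gaussianReal_map_const_mul]
  have h₂ : Measure.map (fun ω => a * Y₀ ω + b) ℙ
      = gaussianReal (a * (-c * Real.exp (-σ * T)) + b)
          (NNReal.mk (a ^ 2) (sq_nonneg _) * Real.toNNReal (σ / (1 + Real.tanh (σ * T)))) :=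
    GaussAux.map_add_const' (hmeas₀.const_mul a) h₁ b
  have hindep' : IndepFun (fun ω => a * Y₀ ω + b) G :=
    hindep.comp ((measurable_id.const_mul a).add_const b) measurable_id
  have hsum := GaussAux.indep_gaussian_add ((hmeas₀.const_mul a).add_const b) hmeasG
    hindep' h₂ hG
  rw [hsum]
  -- nonnegativity facts
  have hv₀ : 0 ≤ σ / (1 + Real.tanh (σ * T)) :=
    div_nonneg hσ.le (GaussAux.one_add_tanh_pos _).le
  have hvt : 0 ≤ σ / (1 + Real.tanh (σ * (T - t))) :=
    div_nonneg hσ.le (GaussAux.one_add_tanh_pos _).le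
  have htanh : 0 ≤ Real.tanh (σ * T) - Real.tanh (σ * (T - t)) := by
    rw [GaussAux.tanh_sub_tanh]
    have h1 : 0 ≤ Real.sinh (σ * T - σ * (T - t)) := by
      rw [show σ * T - σ * (T - t) = σ * t by ring]
      exact Real.sinh_nonneg_iff.mpr (by positivity)
    positivity
  have hvG : 0 ≤ σ ^ 2 * Real.cosh (σ * (T - t)) ^ 2 *
      ∫ s in (0:ℝ)..t, 1 / Real.cosh (σ * (T - s)) ^ 2 := by
    rw [hint]
    positivity
  congr 1
  · exact GaussAux.mean_identity σ c T t
  · apply NNReal.coe_injective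
    push_cast
    rw [Real.coe_toNNReal _ hv₀, Real.coe_toNNReal _ hvG, Real.coe_toNNReal _ hvt, hint]
    exact GaussAux.var_identity σ c T t
end

section
/- Let L be the generator Lf = (σ²/2)f'' − cσ f' and m_t(x) the explicit solution above. Then for f ∈ C²_b, the spinal generator 𝒢_t f(x) = (L(m_{T−t} f)(x) − f(x) L m_{T−t}(x))/m_{T−t}(x) equals (σ²/2) f''(x) − σ x tanh(σ(T−t)) f'(x) − (σc/cosh(σ(T−t))) f'(x). -/
open Real

theorem spinal_generator_explicit (σ c T t : ℝ) (hσ : 0 < σ) (hT : 0 < T)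
    (ht : 0 ≤ t) (htT : t ≤ T)
    (m : ℝ → ℝ → ℝ)
    (hm : ∀ s x, m s x =
      Real.sqrt (1 + Real.tanh (σ * s)) *
        Real.exp (-((x + Real.exp (-σ * s) * c) ^ 2 / (2 * σ)) * (1 + Real.tanh (σ * s))
          + (x + c) ^ 2 / (2 * σ)))
    (L : (ℝ → ℝ) → ℝ → ℝ)
    (hL : ∀ g x, L g x = σ ^ 2 / 2 * deriv (deriv g) x - c * σ * deriv g x)
    (f : ℝ → ℝ) (hf : ContDiff ℝ 2 f) :
    ∀ x : ℝ,
      (L (fun y => m (T - t) y * f y) x - f x * L (m (T - t)) x) / m (T - t) x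
        = σ ^ 2 / 2 * deriv (deriv f) x
            - σ * x * Real.tanh (σ * (T - t)) * deriv f x
            - σ * c / Real.cosh (σ * (T - t)) * deriv f x := by
  intro x
  have hσ' : σ ≠ 0 := ne_of_gt hσ
  set s := T - t with hs
  set K := 1 + Real.tanh (σ * s) with hK
  set B := Real.exp (-σ * s) * c with hB
  set A := Real.sqrt K with hA
  have hmeq : m s = fun y =>
      A * Real.exp (-((y + B) ^ 2 / (2 * σ)) * K + (y + c) ^ 2 / (2 * σ)) := by
    funext y
    rw [hm, hA, hK, hB]
  set M : ℝ → ℝ := fun y =>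
      A * Real.exp (-((y + B) ^ 2 / (2 * σ)) * K + (y + c) ^ 2 / (2 * σ)) with hMdef
  set q : ℝ → ℝ := fun y => ((y + c) - (y + B) * K) / σ with hq
  rw [hmeq]
  -- derivative facts for f
  have hfd : Differentiable ℝ f := hf.differentiable (by norm_num)
  have hf2 : ContDiff ℝ 1 (deriv f) :=
    (contDiff_succ_iff_deriv.mp (show ContDiff ℝ ((1 : ℕ) + 1) f by exact_mod_cast hf)).2.2
  have hfd' : Differentiable ℝ (deriv f) := hf2.differentiable (by norm_num)
  -- derivative of M
  have hEd : ∀ y, HasDerivAt M (M y * q y) y := by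
    intro y
    have h1 : HasDerivAt (fun z : ℝ => (z + B) ^ 2) (2 * (y + B)) y := by
      simpa using (((hasDerivAt_id' y).add_const B).fun_pow 2)
    have h2 : HasDerivAt (fun z : ℝ => (z + c) ^ 2) (2 * (y + c)) y := by
      simpa using (((hasDerivAt_id' y).add_const c).fun_pow 2)
    have h3 : HasDerivAt
        (fun z : ℝ => -((z + B) ^ 2 / (2 * σ)) * K + (z + c) ^ 2 / (2 * σ)) (q y) y := by
      have h := ((h1.div_const (2 * σ)).neg.mul_const K).add (h2.div_const (2 * σ))
      refine h.congr_deriv ?_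
      rw [hq]
      field_simp
      ring
    have h4 := (h3.exp).const_mul A
    simp only [hMdef]
    refine h4.congr_deriv ?_
    ring
  have hqd : ∀ y : ℝ, HasDerivAt q ((1 - K) / σ) y := by
    intro y
    have h := (((hasDerivAt_id y).add_const c).sub
      (((hasDerivAt_id y).add_const B).mul_const K)).div_const σ
    simp only [hq]
    refine h.congr_deriv ?_
    ring
  have hM1 : deriv M = fun y => M y * q y := funext fun y => (hEd y).deriv
  have hMf1 : deriv (fun y => M y * f y) = fun y => M y * q y * f y + M y * deriv f y :=
    funext fun y => ((hEd y).mul (hfd y).hasDerivAt).deriv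
  have hM2 : deriv (deriv M) x = M x * q x * q x + M x * ((1 - K) / σ) := by
    rw [hM1]
    exact ((hEd x).mul (hqd x)).deriv
  have hMf2 : deriv (deriv (fun y => M y * f y)) x =
      ((M x * q x * q x + M x * ((1 - K) / σ)) * f x + M x * q x * deriv f x)
        + (M x * q x * deriv f x + M x * deriv (deriv f) x) := by
    rw [hMf1]
    exact ((((hEd x).mul (hqd x)).mul (hfd x).hasDerivAt).add
      ((hEd x).mul (hfd' x).hasDerivAt)).deriv
  have hMf1x : deriv (fun y => M y * f y) x = M x * q x * f x + M x * deriv f x := by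
    rw [hMf1]
  have hM1x : deriv M x = M x * q x := by rw [hM1]
  -- positivity
  have hKpos : 0 < K := by
    rw [hK, Real.tanh_eq_sinh_div_cosh]
    have hc : (0 : ℝ) < Real.cosh (σ * s) := Real.cosh_pos (σ * s)
    have h7 : 1 + Real.sinh (σ * s) / Real.cosh (σ * s) =
        Real.exp (σ * s) / Real.cosh (σ * s) := by
      rw [← Real.cosh_add_sinh (σ * s), add_div, div_self (ne_of_gt hc)]
    rw [h7]
    positivity
  have hApos : 0 < A := by rw [hA]; exact Real.sqrt_pos.mpr hKpos
  have hMx : 0 < M x := by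
    simp only [hMdef]
    exact mul_pos hApos (Real.exp_pos _)
  -- key algebraic identity
  have hc0 : Real.cosh (σ * s) ≠ 0 := (Real.cosh_pos (σ * s)).ne'
  have hexp : Real.exp (-σ * s) * K = 1 / Real.cosh (σ * s) := by
    rw [hK, Real.tanh_eq_sinh_div_cosh]
    field_simp
    rw [Real.cosh_add_sinh, ← Real.exp_add]
    simp
  have hkey : σ ^ 2 * q x - c * σ =
      -(σ * x * Real.tanh (σ * s)) - σ * c / Real.cosh (σ * s) := by
    have htanh : Real.tanh (σ * s) = K - 1 := by rw [hK]; ring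
    have h6 : σ * c / Real.cosh (σ * s) = σ * c * (Real.exp (-σ * s) * K) := by
      rw [hexp]; ring
    rw [h6, htanh]
    simp only [hq, hB]
    field_simp
    ring
  rw [hL, hL, hMf2, hM2, hMf1x, hM1x, div_eq_iff (ne_of_gt hMx)]
  linear_combination (M x * deriv f x) * hkey
end
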